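/- Let Γ be a Bieberbach-type subgroup of the affine group of ℝⁿ with parameters (n, q). Then there exists u₀ ∈ ℝⁿ such that, writing t for the translation t(x) = x + u₀, for every γ ∈ Γ the conjugate t ∘ γ ∘ t⁻¹ is the affine map x ↦ g_γ x + w_γ with w_γ ∈ (1/q)ℤⁿ; that is, t ∘ Γ ∘ t⁻¹ is contained in (1/q)ℤⁿ ⋊ GLₙ(ℤ). -/

import Mathlib

open Matrix

noncomputable section

abbrev Aff (n : ℕ) := (Fin n → ℝ) ≃ᵃ[ℝ] (Fin n → ℝ)

/-- `ℤⁿ` as a subset of `ℝⁿ`. -/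
def intVec (n : ℕ) : Set (Fin n → ℝ) := {v | ∀ i, ∃ m : ℤ, v i = m}

/-- `(1/q)ℤⁿ` as a subset of `ℝⁿ`. -/
def qIntVec (n q : ℕ) : Set (Fin n → ℝ) := {v | ∀ i, ∃ m : ℤ, (q : ℝ) * v i = m}

/-- The translation part `u_γ` of an affine bijection. -/
def uPart {n : ℕ} (γ : Aff n) : Fin n → ℝ := γ 0

/-- The linear part `g_γ` of an affine bijection. -/
def gPart {n : ℕ} (γ : Aff n) : (Fin n → ℝ) →ₗ[ℝ] (Fin n → ℝ) := γ.linear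

/-- A linear map lies in `GLₙ(ℤ)` if it is given by an integer matrix invertible over `ℤ`. -/
def IsIntegralGL {n : ℕ} (f : (Fin n → ℝ) →ₗ[ℝ] (Fin n → ℝ)) : Prop :=
  ∃ M : Matrix (Fin n) (Fin n) ℤ, IsUnit M ∧ ∀ x, f x = (M.map (Int.cast : ℤ → ℝ)) *ᵥ x

/-- The subgroup of translations by integer vectors. -/
def intTranslations (n : ℕ) : Subgroup (Aff n) where
  carrier := {γ | ∃ m ∈ intVec n, ∀ x, γ x = x + m}
  one_mem' := ⟨0, fun i => ⟨0, by simp⟩, fun x => by simp [AffineEquiv.one_def]⟩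
  mul_mem' := by
    rintro a b ⟨ma, hma, ha⟩ ⟨mb, hmb, hb⟩
    refine ⟨mb + ma, fun i => ?_, fun x => ?_⟩
    · obtain ⟨p, hp⟩ := hma i; obtain ⟨r, hr⟩ := hmb i
      exact ⟨r + p, by simp [Pi.add_apply, hp, hr]⟩
    · simp [AffineEquiv.coe_mul, Function.comp, hb, ha, add_assoc]
  inv_mem' := by
    rintro a ⟨m, hm, ha⟩
    refine ⟨-m, fun i => ?_, fun x => ?_⟩
    · obtain ⟨p, hp⟩ := hm i; exact ⟨-p, by simp [hp]⟩
    · have : a (x + -m) = x := by rw [ha]; abel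
      calc a⁻¹ x = a⁻¹ (a (x + -m)) := by rw [this]
      _ = x + -m := by rw [AffineEquiv.inv_def, AffineEquiv.symm_apply_apply]

/-- A Bieberbach-type subgroup of the affine group of `ℝⁿ` with parameters `(n, q)`. -/
structure IsBieberbach {n : ℕ} (Γ : Subgroup (Aff n)) (q : ℕ) : Prop where
  /-- every element has linear part in `GLₙ(ℤ)` -/
  integral : ∀ γ ∈ Γ, IsIntegralGL (gPart γ)
  /-- elements with identity linear part are integer translations -/
  trans_of_linear_id : ∀ γ ∈ Γ, γ.linear = LinearEquiv.refl ℝ (Fin n → ℝ) → γ ∈ intTranslations n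
  /-- all integer translations belong to `Γ` -/
  trans_le : intTranslations n ≤ Γ
  /-- the integer translations have index `q` in `Γ` -/
  index_eq : ((intTranslations n).subgroupOf Γ).index = q


namespace Claim1Aux

variable {n : ℕ}

lemma aff_apply (γ : Aff n) (x : Fin n → ℝ) : γ x = γ.linear x + γ 0 := by
  have := γ.map_vadd (0 : Fin n → ℝ) x; simpa using this

lemma intVec_neg {v : Fin n → ℝ} (hv : v ∈ intVec n) : -v ∈ intVec n := fun i => by
  obtain ⟨m, hm⟩ := hv i; exact ⟨-m, by simp [hm]⟩

lemma intVec_sub {v w : Fin n → ℝ} (hv : v ∈ intVec n) (hw : w ∈ intVec n) :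
    v - w ∈ intVec n := fun i => by
  obtain ⟨m, hm⟩ := hv i; obtain ⟨k, hk⟩ := hw i
  exact ⟨m - k, by simp [Pi.sub_apply, hm, hk]⟩

lemma intVec_sum {ι : Type*} [Fintype ι] (f : ι → (Fin n → ℝ))
    (hf : ∀ i, f i ∈ intVec n) : (∑ i, f i) ∈ intVec n := fun i => by
  have h : ∀ j : ι, ∃ m : ℤ, f j i = m := fun j => hf j i
  choose m hm using h
  exact ⟨∑ j, m j, by simp [Finset.sum_apply, hm]⟩

lemma linear_int {q : ℕ} {Γ : Subgroup (Aff n)} (hΓ : IsBieberbach Γ q)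
    {γ : Aff n} (hγ : γ ∈ Γ) {v : Fin n → ℝ} (hv : v ∈ intVec n) :
    γ.linear v ∈ intVec n := by
  obtain ⟨M, -, hM⟩ := hΓ.integral γ hγ
  intro i
  choose z hz using hv
  refine ⟨∑ j, M i j * z j, ?_⟩
  have h1 : γ.linear v = (M.map (Int.cast : ℤ → ℝ)) *ᵥ v := hM v
  rw [h1]
  simp only [Matrix.mulVec, dotProduct, Matrix.map_apply]
  push_cast
  exact Finset.sum_congr rfl fun j _ => by rw [hz j]

lemma uPart_sub {q : ℕ} {Γ : Subgroup (Aff n)} (hΓ : IsBieberbach Γ q)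
    {γ₁ γ₂ : Aff n} (h₁ : γ₁ ∈ Γ) (hτ : γ₁⁻¹ * γ₂ ∈ intTranslations n) :
    uPart γ₂ - uPart γ₁ ∈ intVec n := by
  obtain ⟨m, hm, hτ'⟩ := hτ
  have h3 : γ₁⁻¹ (γ₂ 0) = m := by
    have := hτ' 0
    simpa [AffineEquiv.coe_mul, Function.comp] using this
  have h2 : γ₂ 0 = γ₁ m := by
    conv_lhs => rw [show γ₂ 0 = γ₁ (γ₁⁻¹ (γ₂ 0)) by
      rw [AffineEquiv.inv_def, AffineEquiv.apply_symm_apply]]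
    rw [h3]
  have h4 : uPart γ₂ - uPart γ₁ = γ₁.linear m := by
    rw [uPart, uPart, h2, aff_apply γ₁ m]; abel
  rw [h4]
  exact linear_int hΓ h₁ hm

end Claim1Aux


/-- **Claim 1** (Farrell–Gogolev, proof of Proposition 3): for a Bieberbach-type
subgroup `Γ` of the affine group of `ℝⁿ` with parameters `(n, q)`, there is a vector
`u₀` such that conjugating `Γ` by the translation `t : x ↦ x + u₀` lands in
`(1/q)ℤⁿ ⋊ GLₙ(ℤ)`; i.e. for each `γ ∈ Γ` the map `t ∘ γ ∘ t⁻¹` is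
`x ↦ g_γ x + w_γ` with `w_γ ∈ (1/q)ℤⁿ`. -/
theorem claim1 {n q : ℕ} (hq : 0 < q) (Γ : Subgroup (Aff n)) (hΓ : IsBieberbach Γ q) :
    ∃ u₀ : Fin n → ℝ, ∀ γ ∈ Γ, ∃ w ∈ qIntVec n q,
      ∀ x, γ (x - u₀) + u₀ = γ.linear x + w := by
  classical
  set H := (intTranslations n).subgroupOf Γ with hH
  have hcard : Nat.card (Γ ⧸ H) = q := hΓ.index_eq
  have hfin : Finite (Γ ⧸ H) := Nat.finite_of_card_ne_zero (by omega)
  haveI := Fintype.ofFinite (Γ ⧸ H)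
  have hq' : Fintype.card (Γ ⧸ H) = q := by rw [← Nat.card_eq_fintype_card]; exact hcard
  set S : Fin n → ℝ := ∑ c : Γ ⧸ H, uPart ((Quotient.out c : Γ) : Aff n) with hS
  refine ⟨-((q : ℝ)⁻¹ • S), ?_⟩
  intro γ hγ
  set u₀ : Fin n → ℝ := -((q : ℝ)⁻¹ • S) with hu₀
  set γ' : Γ := ⟨γ, hγ⟩ with hγ'
  -- the key integrality
  set F : (Γ ⧸ H) → (Fin n → ℝ) := fun c =>
    uPart ((Quotient.out (γ' • c) : Γ) : Aff n) -
      (γ.linear (uPart ((Quotient.out c : Γ) : Aff n)) + γ 0) with hF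
  have hFint : ∀ c, F c ∈ intVec n := by
    intro c
    set d : Γ := Quotient.out (γ' • c)
    set e : Γ := γ' * Quotient.out c
    have hde : ((d : Γ) : Γ ⧸ H) = ((e : Γ) : Γ ⧸ H) :=
      calc ((d : Γ) : Γ ⧸ H) = γ' • c := QuotientGroup.out_eq' (γ' • c)
      _ = γ' • ((Quotient.out c : Γ) : Γ ⧸ H) :=
          congrArg (fun z => γ' • z) (QuotientGroup.out_eq' c).symm
      _ = ((e : Γ) : Γ ⧸ H) := rfl
    have hmem : ((e : Aff n))⁻¹ * ((d : Aff n)) ∈ intTranslations n := by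
      have h5 : e⁻¹ * d ∈ H := QuotientGroup.eq.mp hde.symm
      rw [hH, Subgroup.mem_subgroupOf] at h5
      simpa using h5
    have h6 := Claim1Aux.uPart_sub hΓ e.2 hmem
    have h7 : uPart ((e : Γ) : Aff n) = γ.linear (uPart ((Quotient.out c : Γ) : Aff n)) + γ 0 := by
      show uPart (γ * ((Quotient.out c : Γ) : Aff n)) = _
      rw [uPart, uPart]
      have : (γ * ((Quotient.out c : Γ) : Aff n)) 0
          = γ (((Quotient.out c : Γ) : Aff n) 0) := rfl
      rw [this, Claim1Aux.aff_apply]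
    rw [hF]
    simpa [h7] using h6
  have hsum : (∑ c : Γ ⧸ H, F c) ∈ intVec n := Claim1Aux.intVec_sum F hFint
  have hreindex : ∑ c : Γ ⧸ H, uPart ((Quotient.out (γ' • c) : Γ) : Aff n) = S := by
    rw [hS]
    exact Fintype.sum_bijective (fun c : Γ ⧸ H => γ' • c) (MulAction.bijective γ')
      _ _ (fun c => rfl)
  have hsum2 : (∑ c : Γ ⧸ H, F c) = S - (γ.linear S + (q : ℝ) • γ 0) := by
    rw [hF]
    rw [Finset.sum_sub_distrib, hreindex, Finset.sum_add_distrib, ← map_sum, ← hS,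
      Finset.sum_const, Finset.card_univ, hq', ← Nat.cast_smul_eq_nsmul ℝ]
  set w : Fin n → ℝ := γ 0 - γ.linear u₀ + u₀ with hw
  have hqw : (q : ℝ) • w ∈ intVec n := by
    have hq0 : (q : ℝ) ≠ 0 := by positivity
    have hqu : (q : ℝ) • u₀ = -S := by
      rw [hu₀, smul_neg, smul_smul, mul_inv_cancel₀ hq0, one_smul]
    have h8 : (q : ℝ) • γ.linear u₀ = -(γ.linear S) := by
      rw [← γ.linear.map_smul, hqu, map_neg]
    have : (q : ℝ) • w = -(S - (γ.linear S + (q : ℝ) • γ 0)) := by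
      rw [hw, smul_add, smul_sub, hqu, h8]
      abel
    rw [this, ← hsum2]
    exact Claim1Aux.intVec_neg hsum
  refine ⟨w, ?_, ?_⟩
  · intro i
    obtain ⟨m, hm⟩ := hqw i
    exact ⟨m, by simpa using hm⟩
  · intro x
    rw [Claim1Aux.aff_apply γ (x - u₀), map_sub, hw]
    abel
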